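/- Let q be a positive integer and set κ_q = ζ₀/(2πq), where ζ₀ is the unique root in (0, π) of φ(ζ) = 1 with φ(ζ) = (sinζ/ζ)(2−cosζ); then κ_q ∈ (0, 1/2), and χ₁(κ; q, q) < 0 for all κ ∈ (0, κ_q), while χ₁(κ; q, q) > 0 for all κ ∈ (κ_q, 1/2). -/

import Mathlib

open MeasureTheory Real Set Filter
open scoped ENNReal

noncomputable section

/-- The quantity `χ₁(κ; ℓ, q)`. -/
def chi1 (κ : ℝ) (l q : ℕ) : ℝ :=
  if l = q then
    κ + Real.sin (4 * π * q * κ) / (4 * π * q) - Real.sin (2 * π * q * κ) / (π * q)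
  else
    Real.sin (2 * π * ((l:ℝ) - q) * κ) / (2 * π * ((l:ℝ) - q))
      + Real.sin (2 * π * ((l:ℝ) + q) * κ) / (2 * π * ((l:ℝ) + q))
      - Real.sin (2 * π * q * κ) / (π * q)

/-- Auxiliary function: `f ζ = ζ + sin(2ζ)/2 − 2 sin ζ = ζ − (sin ζ)(2 − cos ζ)`. -/
def auxF (x : ℝ) : ℝ := x + Real.sin (2 * x) / 2 - 2 * Real.sin x

lemma auxF_eq (x : ℝ) : auxF x = x - Real.sin x * (2 - Real.cos x) := by
  unfold auxF
  rw [Real.sin_two_mul]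
  ring

lemma auxF_hasDerivAt (x : ℝ) :
    HasDerivAt auxF (2 * Real.cos x * (Real.cos x - 1)) x := by
  have h1 : HasDerivAt (fun y : ℝ => Real.sin (2 * y)) (Real.cos (2 * x) * 2) x := by
    have := (Real.hasDerivAt_sin (2 * x)).comp x
      ((hasDerivAt_id x).const_mul (2 : ℝ))
    simpa [Function.comp_def] using this
  have h2 : HasDerivAt auxF (1 + Real.cos (2 * x) * 2 / 2 - 2 * Real.cos x) x := by
    exact ((hasDerivAt_id x).add (h1.div_const 2)).sub
      ((Real.hasDerivAt_sin x).const_mul 2)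
  convert h2 using 1
  rw [Real.cos_two_mul]
  ring

lemma auxF_anti : StrictAntiOn auxF (Set.Icc 0 (π / 2)) := by
  apply strictAntiOn_of_deriv_neg (convex_Icc _ _)
  · exact Continuous.continuousOn (by unfold auxF; fun_prop)
  · intro x hx
    rw [interior_Icc] at hx
    rw [(auxF_hasDerivAt x).deriv]
    have hc : 0 < Real.cos x := Real.cos_pos_of_mem_Ioo
      ⟨by linarith [hx.1, Real.pi_pos], hx.2⟩
    have hc1 : Real.cos x < 1 := by
      calc Real.cos x < Real.cos 0 := by
            apply Real.cos_lt_cos_of_nonneg_of_le_pi le_rfl (by linarith [Real.pi_pos, hx.2]) hx.1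
        _ = 1 := Real.cos_zero
    nlinarith

lemma auxF_mono : StrictMonoOn auxF (Set.Icc (π / 2) π) := by
  apply strictMonoOn_of_deriv_pos (convex_Icc _ _)
  · exact Continuous.continuousOn (by unfold auxF; fun_prop)
  · intro x hx
    rw [interior_Icc] at hx
    rw [(auxF_hasDerivAt x).deriv]
    have hc : Real.cos x < 0 := Real.cos_neg_of_pi_div_two_lt_of_lt hx.1
      (by linarith [hx.2, Real.pi_pos])
    nlinarith

lemma auxF_pos_of_pi_le {x : ℝ} (hx : π ≤ x) : 0 < auxF x := by
  rw [auxF_eq]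
  have h1 : Real.sin x * (2 - Real.cos x) ≤ 3 := by
    have hs : Real.sin x ≤ 1 := Real.sin_le_one x
    have hs' : -1 ≤ Real.sin x := Real.neg_one_le_sin x
    have hc : -1 ≤ Real.cos x := Real.neg_one_le_cos x
    have hc' : Real.cos x ≤ 1 := Real.cos_le_one x
    nlinarith
  have := Real.pi_gt_three
  linarith

/-- Sign change of `χ₁(κ; q, q)` at `κ_q = ζ₀/(2πq)`, where `ζ₀` is the
unique root in `(0, π)` of `(sin ζ/ζ)(2 − cos ζ) = 1`. -/
theorem stmt14 (q : ℕ) (hq : 0 < q) (ζ₀ : ℝ)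
    (hζ₀ : ζ₀ ∈ Set.Ioo 0 π) (hroot : (Real.sin ζ₀ / ζ₀) * (2 - Real.cos ζ₀) = 1) :
    ζ₀ / (2 * π * q) ∈ Set.Ioo (0:ℝ) (1/2) ∧
    (∀ κ ∈ Set.Ioo (0:ℝ) (ζ₀ / (2 * π * q)), chi1 κ q q < 0) ∧
    (∀ κ ∈ Set.Ioo (ζ₀ / (2 * π * q)) (1/2:ℝ), 0 < chi1 κ q q) := by
  have hπ : 0 < π := Real.pi_pos
  have hq1 : (1:ℝ) ≤ q := by exact_mod_cast hq
  have hqpos : (0:ℝ) < q := by linarith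
  have h2πq : (0:ℝ) < 2 * π * q := by positivity
  obtain ⟨hζ0, hζπ⟩ := hζ₀
  -- f ζ₀ = 0
  have hf0 : auxF ζ₀ = 0 := by
    rw [auxF_eq]
    have : Real.sin ζ₀ * (2 - Real.cos ζ₀) = ζ₀ := by
      field_simp at hroot
      linarith [hroot]
    linarith
  -- ζ₀ > π/2
  have hζhalf : π / 2 < ζ₀ := by
    by_contra h
    push_neg at h
    have h1 := auxF_anti (Set.left_mem_Icc.2 (by linarith)) ⟨hζ0.le, h⟩ hζ0
    have h2 : auxF 0 = 0 := by simp [auxF]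
    linarith
  -- sign of auxF
  have hneg : ∀ x ∈ Set.Ioo (0:ℝ) ζ₀, auxF x < 0 := by
    intro x hx
    rcases le_or_gt x (π / 2) with h | h
    · have h1 := auxF_anti (Set.left_mem_Icc.2 (by linarith)) ⟨hx.1.le, h⟩ hx.1
      have h2 : auxF 0 = 0 := by simp [auxF]
      linarith
    · have := auxF_mono ⟨h.le, by linarith [hx.2]⟩ ⟨hζhalf.le, hζπ.le⟩ hx.2
      rwa [hf0] at this
  have hpos : ∀ x ∈ Set.Ioo ζ₀ (π * q), 0 < auxF x := by
    intro x hx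
    rcases le_or_gt x π with h | h
    · have := auxF_mono ⟨hζhalf.le, hζπ.le⟩ ⟨by linarith [hx.1, hζhalf], h⟩ hx.1
      rwa [hf0] at this
    · exact auxF_pos_of_pi_le h.le
  -- chi1 = auxF (2πqκ) / (2πq)
  have hchi : ∀ κ : ℝ, chi1 κ q q = auxF (2 * π * q * κ) / (2 * π * q) := by
    intro κ
    simp only [chi1, if_pos rfl, auxF, eq_self_iff_true, ite_true]
    have h4 : (4:ℝ) * π * q * κ = 2 * (2 * π * q * κ) := by ring
    rw [h4]
    field_simp
    ring
  refine ⟨⟨by positivity, ?_⟩, ?_, ?_⟩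
  · rw [div_lt_iff₀ h2πq]
    have : π ≤ π * q := by nlinarith
    linarith
  · intro κ hκ
    rw [hchi]
    apply div_neg_of_neg_of_pos _ h2πq
    apply hneg
    constructor
    · have := hκ.1; positivity
    · calc 2 * π * q * κ < 2 * π * q * (ζ₀ / (2 * π * q)) := by
            apply mul_lt_mul_of_pos_left hκ.2 h2πq
        _ = ζ₀ := by field_simp
  · intro κ hκ
    rw [hchi]
    apply div_pos _ h2πq
    apply hpos
    constructor
    · calc ζ₀ = 2 * π * q * (ζ₀ / (2 * π * q)) := by field_simp
        _ < 2 * π * q * κ := mul_lt_mul_of_pos_left hκ.1 h2πq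
    · calc 2 * π * q * κ < 2 * π * q * (1/2) := mul_lt_mul_of_pos_left hκ.2 h2πq
        _ = π * q := by ring
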